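/- Let G be a finite group and x₀,x₁,x₂,x₃ ∈ G satisfy xᵢ xᵢ₊₁ xᵢ⁻¹ = xᵢ₊₁² for all i mod 4. Then x₀ = x₁ = x₂ = x₃ = 1. (Higman's theorem: the Higman group has no nontrivial finite quotients.) -/
import Mathlib

lemma higman_conj_pow {G : Type} [Group G] (a b : G) (h : a * b * a⁻¹ = b ^ 2) :
    ∀ k : ℕ, a ^ k * b * (a ^ k)⁻¹ = b ^ (2 ^ k) := by
  intro k
  induction k with
  | zero => simp
  | succ k ih =>
    have : a ^ (k + 1) * b * (a ^ (k + 1))⁻¹ = a * (a ^ k * b * (a ^ k)⁻¹) * a⁻¹ := by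
      group
    rw [this, ih]
    have h2 : a * b ^ (2 ^ k) * a⁻¹ = (a * b * a⁻¹) ^ (2 ^ k) := by
      rw [conj_pow]
    rw [h2, h, ← pow_mul]
    ring_nf

lemma higman_order_dvd {G : Type} [Group G] [Finite G] (a b : G) (h : a * b * a⁻¹ = b ^ 2) :
    orderOf b ∣ 2 ^ (orderOf a) - 1 := by
  have hkey := higman_conj_pow a b h (orderOf a)
  rw [pow_orderOf_eq_one a] at hkey
  simp at hkey
  -- hkey : b = b ^ (2 ^ orderOf a)
  have h1 : 1 ≤ 2 ^ (orderOf a) := Nat.one_le_two_pow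
  apply orderOf_dvd_of_pow_eq_one
  have h2 : b ^ (2 ^ orderOf a - 1) * b = 1 * b := by
    rw [← pow_succ, Nat.sub_add_cancel h1, ← hkey, one_mul]
  exact mul_right_cancel h2

/-- Higman: in a finite group, elements x₀,x₁,x₂,x₃ with xᵢ xᵢ₊₁ xᵢ⁻¹ = xᵢ₊₁² (mod 4)
are all trivial. -/
theorem stmt_15 (G : Type) [Group G] [Finite G] (x : ZMod 4 → G)
    (hx : ∀ i : ZMod 4, x i * x (i + 1) * (x i)⁻¹ = (x (i + 1)) ^ 2) :
    ∀ i : ZMod 4, x i = 1 := by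
  have hstep : ∀ i : ZMod 4, x i = 1 → x (i + 1) = 1 := by
    intro i h
    have h0 := hx i
    rw [h] at h0
    simp [sq] at h0
    exact h0
  by_cases hex : ∃ i : ZMod 4, x i = 1
  · obtain ⟨i, hi⟩ := hex
    have h1 := hstep i hi
    have h2 := hstep _ h1
    have h3 := hstep _ h2
    intro j
    have key : ∀ a b : ZMod 4, b = a ∨ b = a + 1 ∨ b = a + 1 + 1 ∨ b = a + 1 + 1 + 1 := by
      decide
    have hj := key i j
    rcases hj with rfl | rfl | rfl | rfl <;> assumption
  · push_neg at hex
    exfalso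
    set n : ZMod 4 → ℕ := fun i => orderOf (x i) with hn
    have hn2 : ∀ i, 2 ≤ n i := by
      intro i
      have : 1 < orderOf (x i) := by
        rcases Nat.lt_or_ge (orderOf (x i)) 2 with h | h
        · interval_cases h' : orderOf (x i)
          · exact absurd h' (orderOf_pos (x i)).ne'
          · exact absurd (orderOf_eq_one_iff.mp h') (hex i)
        · exact h
      exact this
    have hdvd : ∀ i : ZMod 4, n (i + 1) ∣ 2 ^ (n i) - 1 :=
      fun i => higman_order_dvd _ _ (hx i)
    -- minimal prime dividing the product of all n i
    set N : ℕ := ∏ i : ZMod 4, n i with hN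
    have hNpos : 0 < N := Finset.prod_pos (fun i _ => orderOf_pos (x i))
    have hdvd0 : n 0 ∣ N := Finset.dvd_prod_of_mem n (Finset.mem_univ 0)
    have hN1 : 2 ≤ N := le_trans (hn2 0) (Nat.le_of_dvd hNpos hdvd0)
    set p : ℕ := N.minFac with hp
    have hpp : p.Prime := Nat.minFac_prime (by omega)
    have hpdvd : p ∣ N := Nat.minFac_dvd N
    obtain ⟨j, _, hpj⟩ := hpp.prime.exists_mem_finset_dvd hpdvd
    -- p ∣ n j, and j = (j-1)+1
    have hj1 : (j - 1) + 1 = j := by ring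
    have hpdvd2 : p ∣ 2 ^ (n (j - 1)) - 1 := by
      refine dvd_trans ?_ (hdvd (j - 1))
      rw [hj1]; exact hpj
    have hm1 : 1 ≤ 2 ^ (n (j - 1)) := Nat.one_le_two_pow
    -- p is odd
    have hpodd : p ≠ 2 := by
      intro h2
      rw [h2] at hpdvd2
      have h2d : 2 ∣ 2 ^ (n (j - 1)) := dvd_pow_self 2 (by have := hn2 (j-1); omega)
      have h3 := Nat.dvd_sub h2d hpdvd2
      rw [Nat.sub_sub_self hm1] at h3
      omega
    have hp3 : 3 ≤ p := by
      have := hpp.two_le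
      omega
    haveI : Fact p.Prime := ⟨hpp⟩
    -- order of 2 mod p
    have h2pow : (2 : ZMod p) ^ (n (j - 1)) = 1 := by
      have hc : ((2 ^ (n (j - 1)) - 1 : ℕ) : ZMod p) = 0 :=
        (ZMod.natCast_eq_zero_iff _ _).mpr hpdvd2
      push_cast [Nat.cast_sub hm1] at hc
      linear_combination hc
    set d : ℕ := orderOf (2 : ZMod p) with hd
    have hd_dvd : d ∣ n (j - 1) := orderOf_dvd_of_pow_eq_one h2pow
    have h2ne : (2 : ZMod p) ≠ 0 := by
      intro h0
      have : ((2 : ℕ) : ZMod p) = 0 := by push_cast; exact h0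
      have := (ZMod.natCast_eq_zero_iff 2 p).mp this
      have := Nat.le_of_dvd (by norm_num) this
      omega
    have hd_dvd_p1 : d ∣ p - 1 :=
      orderOf_dvd_of_pow_eq_one (ZMod.pow_card_sub_one_eq_one h2ne)
    have hd1 : d ≠ 1 := by
      intro h1'
      have h21 : (2 : ZMod p) = 1 := orderOf_eq_one_iff.mp h1'
      have : ((1 : ℕ) : ZMod p) = 0 := by
        push_cast
        linear_combination h21
      have := Nat.le_of_dvd one_pos ((ZMod.natCast_eq_zero_iff 1 p).mp this)
      omega
    have hdpos : 0 < d := Nat.pos_of_ne_zero (by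
      intro h0
      rw [h0] at hd_dvd_p1
      have := Nat.eq_zero_of_zero_dvd hd_dvd_p1
      omega)
    set q : ℕ := d.minFac with hq
    have hqp : q.Prime := Nat.minFac_prime hd1
    have hq_dvd : q ∣ n (j - 1) := dvd_trans (Nat.minFac_dvd d) hd_dvd
    -- minimality of p violated
    have hq_dvd_N : q ∣ N := dvd_trans hq_dvd (Finset.dvd_prod_of_mem n (Finset.mem_univ (j - 1)))
    have hpq : p ≤ q := Nat.minFac_le_of_dvd hqp.two_le hq_dvd_N
    have hqd : q ≤ d := Nat.minFac_le hdpos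
    have hdp1 : d ≤ p - 1 := Nat.le_of_dvd (by omega) hd_dvd_p1
    omega
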